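/- arXiv:2202.04957 — 2 statements merged into one kernel-verified Lean document; each statement's English description precedes it below -/
import Mathlib

section
/- Let G be a graph with Laplacian L, a, b twin vertices, M = (e_a - e_b)(e_a - e_b)^T, α ∈ ℝ, and q an index distinct from a and b. If ατ ∈ πℤ, then exp(-i τ (L + α M))(e_a - e_q) = exp(-i τ L)(e_a - e_q). Consequently, if G has Laplacian perfect pair state transfer from e_a - e_q to some pair state e_c - e_d at time τ (i.e., exp(-iτL)(e_a - e_q) = γ(e_c - e_d) with |γ| = 1), then the perturbed graph G + α{a,b} also has it. -/
open Matrix Complex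

lemma exp_smul_idem {m : ℕ} (P : Matrix (Fin m) (Fin m) ℂ) (hP : P * P = P) (z : ℂ) :
    NormedSpace.exp (z • P) = 1 + (Complex.exp z - 1) • P := by
  letI : SeminormedRing (Matrix (Fin m) (Fin m) ℂ) := Matrix.linftyOpSemiNormedRing
  letI : NormedRing (Matrix (Fin m) (Fin m) ℂ) := Matrix.linftyOpNormedRing
  letI : NormedAlgebra ℂ (Matrix (Fin m) (Fin m) ℂ) := Matrix.linftyOpNormedAlgebra
  have hPn : ∀ k : ℕ, P ^ (k + 1) = P := by
    intro k
    induction k with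
    | zero => simp
    | succ k ih => rw [pow_succ, ih, hP]
  simp only [NormedSpace.exp_eq_tsum ℂ]
  have hs : Summable fun k : ℕ => ((k.factorial : ℂ))⁻¹ • (z • P) ^ k :=
    NormedSpace.expSeries_summable' (𝕂 := ℂ) (z • P)
  rw [Summable.tsum_eq_zero_add hs]
  have h1 : ∀ k : ℕ, ((((k+1).factorial : ℂ))⁻¹ • (z • P) ^ (k+1)) =
      ((((k+1).factorial : ℂ))⁻¹ * z ^ (k+1)) • P := by
    intro k
    rw [smul_pow, hPn, smul_smul]
  simp_rw [h1]
  have hc : Summable fun k : ℕ => (((k+1).factorial : ℂ))⁻¹ * z ^ (k+1) := by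
    have := NormedSpace.expSeries_summable' (𝕂 := ℂ) (𝔸 := ℂ) z
    have h' := this.comp_injective (Nat.succ_injective)
    simp only [smul_eq_mul] at h'
    exact h'
  rw [Summable.tsum_smul_const hc]
  have hz : Complex.exp z = 1 + ∑' (k : ℕ), (((k+1).factorial : ℂ))⁻¹ * z ^ (k+1) := by
    simp only [Complex.exp_eq_exp_ℂ, NormedSpace.exp_eq_tsum ℂ]
    have hs2 : Summable fun k : ℕ => ((k.factorial : ℂ))⁻¹ • z ^ k :=
      NormedSpace.expSeries_summable' (𝕂 := ℂ) z
    rw [Summable.tsum_eq_zero_add hs2]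
    simp [smul_eq_mul]
  rw [hz]
  simp [pow_zero]

theorem pair_lpst_preserved_under_twin_perturbation_case_b
    {n : ℕ} (G : SimpleGraph (Fin n)) [DecidableRel G.Adj]
    (a b q : Fin n) (hab : a ≠ b) (hqa : q ≠ a) (hqb : q ≠ b)
    (htwin : ∀ v : Fin n, v ≠ a → v ≠ b → (G.Adj a v ↔ G.Adj b v))
    (α τ : ℝ) (hατ : ∃ k : ℤ, α * τ = k * Real.pi) :
    (NormedSpace.exp ((-(Complex.I * (τ : ℂ))) •
        (G.lapMatrix ℂ + (α : ℂ) •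
          vecMulVec ((Pi.single a 1 : Fin n → ℂ) - Pi.single b 1)
            ((Pi.single a 1 : Fin n → ℂ) - Pi.single b 1)))).mulVec
        ((Pi.single a 1 : Fin n → ℂ) - Pi.single q 1)
      = (NormedSpace.exp ((-(Complex.I * (τ : ℂ))) • G.lapMatrix ℂ)).mulVec
          ((Pi.single a 1 : Fin n → ℂ) - Pi.single q 1)
    ∧ ∀ (c d : Fin n) (γ : ℂ), ‖γ‖ = 1 →
        (NormedSpace.exp ((-(Complex.I * (τ : ℂ))) • G.lapMatrix ℂ)).mulVec
            ((Pi.single a 1 : Fin n → ℂ) - Pi.single q 1)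
          = γ • ((Pi.single c 1 : Fin n → ℂ) - Pi.single d 1) →
        (NormedSpace.exp ((-(Complex.I * (τ : ℂ))) •
            (G.lapMatrix ℂ + (α : ℂ) •
              vecMulVec ((Pi.single a 1 : Fin n → ℂ) - Pi.single b 1)
                ((Pi.single a 1 : Fin n → ℂ) - Pi.single b 1)))).mulVec
            ((Pi.single a 1 : Fin n → ℂ) - Pi.single q 1)
          = γ • ((Pi.single c 1 : Fin n → ℂ) - Pi.single d 1) := by
  set w : Fin n → ℂ := (Pi.single a 1 : Fin n → ℂ) - Pi.single b 1 with hw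
  set M : Matrix (Fin n) (Fin n) ℂ := vecMulVec w w with hM
  set L : Matrix (Fin n) (Fin n) ℂ := G.lapMatrix ℂ with hL
  -- ∑ w k ^2 = 2
  have hwk : ∀ k, w k = (if k = a then 1 else 0) - (if k = b then 1 else 0) := by
    intro k; simp [hw, Pi.single_apply]
  have hww : ∑ u, w u * w u = 2 := by
    have hsq : ∀ u, w u * w u = (if u = a then 1 else 0) + (if u = b then 1 else 0) := by
      intro u
      rw [hwk u]
      by_cases h1 : u = a
      · simp [h1, hab]
      · by_cases h2 : u = b
        · simp [h1, h2, Ne.symm hab]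
        · simp [h1, h2]
    rw [Finset.sum_congr rfl (fun u _ => hsq u), Finset.sum_add_distrib,
      Finset.sum_ite_eq' Finset.univ a (fun _ => (1:ℂ)),
      Finset.sum_ite_eq' Finset.univ b (fun _ => (1:ℂ))]
    norm_num
  have hM2 : M * M = (2 : ℂ) • M := by
    ext i j
    simp only [hM, Matrix.mul_apply, vecMulVec_apply, Matrix.smul_apply, smul_eq_mul]
    calc ∑ k, w i * w k * (w k * w j) = (w i * w j) * ∑ k, w k * w k := by
          rw [Finset.mul_sum]; congr 1; ext k; ring
      _ = 2 * (w i * w j) := by rw [hww]; ring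
  -- degree equality
  have hdeg : G.degree a = G.degree b := by
    rw [← SimpleGraph.card_neighborFinset_eq_degree, ← SimpleGraph.card_neighborFinset_eq_degree]
    apply Finset.card_bij (fun v _ => Equiv.swap a b v)
    · intro v hv
      rw [SimpleGraph.mem_neighborFinset] at hv ⊢
      by_cases hva : v = a
      · exact absurd (hva ▸ hv) (G.irrefl)
      · by_cases hvb : v = b
        · subst hvb; rw [Equiv.swap_apply_right]; exact hv.symm
        · rw [Equiv.swap_apply_of_ne_of_ne hva hvb]
          exact (htwin v hva hvb).mp hv
    · intro v1 _ v2 _ h; exact (Equiv.swap a b).injective h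
    · intro u hu
      refine ⟨Equiv.swap a b u, ?_, by simp⟩
      rw [SimpleGraph.mem_neighborFinset] at hu ⊢
      by_cases hua : u = a
      · subst hua; rw [Equiv.swap_apply_left]; exact hu.symm
      · by_cases hub : u = b
        · exact absurd (hub ▸ hu) (G.irrefl)
        · rw [Equiv.swap_apply_of_ne_of_ne hua hub]
          exact (htwin u hua hub).mpr hu
  -- eigenvector
  set μ : ℂ := (G.degree a : ℂ) + (if G.Adj a b then 1 else 0) with hμ
  have hLw : L *ᵥ w = μ • w := by
    funext v
    rw [hL, SimpleGraph.lapMatrix_mulVec_apply]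
    have hsum : ∑ u ∈ G.neighborFinset v, w u
        = (if G.Adj v a then 1 else 0) - (if G.Adj v b then 1 else 0) := by
      simp only [hwk]
      rw [Finset.sum_sub_distrib]
      congr 1 <;> rw [Finset.sum_ite_eq' _ _ (fun _ => (1:ℂ))] <;>
        simp [SimpleGraph.mem_neighborFinset]
    rw [hsum]
    by_cases hva : v = a
    · rw [hva]
      have h0 : ¬ G.Adj a a := G.irrefl
      simp [hwk, hμ, hab, h0]
      try ring
    · by_cases hvb : v = b
      · rw [hvb]
        have h0 : ¬ G.Adj b b := G.irrefl
        have h1 : G.Adj b a ↔ G.Adj a b := G.adj_comm b a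
        have h3 : b ≠ a := Ne.symm hab
        simp [hwk, hμ, h3, h0, h1, hdeg]
        try ring
      · have h2 : G.Adj v a ↔ G.Adj v b := by
          rw [G.adj_comm v a, G.adj_comm v b]; exact htwin v hva hvb
        simp [hwk, hva, hvb, h2]
  have hsymm : Lᵀ = L := (SimpleGraph.isSymm_lapMatrix (R := ℂ) G)
  have hcomm : Commute L M := by
    show L * M = M * L
    ext i j
    simp only [hM, Matrix.mul_apply, vecMulVec_apply]
    have h1 : ∑ k, L i k * (w k * w j) = (L *ᵥ w) i * w j := by
      rw [Matrix.mulVec, dotProduct, Finset.sum_mul]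
      congr 1; ext k; ring
    have h2 : ∑ k, w i * w k * L k j = w i * (L *ᵥ w) j := by
      rw [Matrix.mulVec, dotProduct, Finset.mul_sum]
      congr 1; ext k
      have hkj : L k j = L j k := by
        have h := congrFun (congrFun hsymm k) j
        rw [Matrix.transpose_apply] at h
        exact h.symm
      rw [hkj]
      ring
    rw [h1, h2, hLw]
    simp only [Pi.smul_apply, smul_eq_mul]
    try ring
  -- exp of the M part is 1
  obtain ⟨k, hk⟩ := hατ
  have hexpM : NormedSpace.exp (((-(Complex.I * (τ : ℂ))) * α) • M) = 1 := by
    set P : Matrix (Fin n) (Fin n) ℂ := (2 : ℂ)⁻¹ • M with hP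
    have hPP : P * P = P := by
      rw [hP, Matrix.smul_mul, Matrix.mul_smul, hM2, smul_smul, smul_smul]
      norm_num
    have hMP : ((-(Complex.I * (τ : ℂ))) * α) • M
        = ((2 : ℂ) * ((-(Complex.I * (τ : ℂ))) * α)) • P := by
      rw [hP, smul_smul]
      congr 1
      field_simp
      try ring
    rw [hMP, exp_smul_idem P hPP]
    have : (2 : ℂ) * ((-(Complex.I * (τ : ℂ))) * α) = ((-k : ℤ) : ℂ) * (2 * Real.pi * Complex.I) := by
      have : ((α : ℂ)) * (τ : ℂ) = ((k : ℂ)) * (Real.pi : ℂ) := by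
        have := congrArg (Complex.ofReal) hk
        push_cast at this ⊢
        linear_combination this
      push_cast
      linear_combination (-2 * Complex.I) * this
    rw [this, Complex.exp_int_mul_two_pi_mul_I]
    simp
  -- combine
  have hsplit : (-(Complex.I * (τ : ℂ))) • (L + (α : ℂ) • M)
      = (-(Complex.I * (τ : ℂ))) • L + ((-(Complex.I * (τ : ℂ))) * α) • M := by
    rw [smul_add, smul_smul]
  have hC : Commute ((-(Complex.I * (τ : ℂ))) • L) (((-(Complex.I * (τ : ℂ))) * α) • M) :=
    (hcomm.smul_left _).smul_right _
  have hmain : NormedSpace.exp ((-(Complex.I * (τ : ℂ))) • (L + (α : ℂ) • M))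
      = NormedSpace.exp ((-(Complex.I * (τ : ℂ))) • L) := by
    rw [hsplit, Matrix.exp_add_of_commute _ _ hC, hexpM, mul_one]
  refine ⟨by rw [hmain], ?_⟩
  intro c d γ _ h
  rw [hmain]
  exact h
end

section
/- Let G be a graph with Laplacian L, a, b twin vertices, M = (e_a - e_b)(e_a - e_b)^T, α ∈ ℝ. If the pair state e_a - e_b is periodic at time τ in G (i.e., exp(-iτL)(e_a - e_b) = γ(e_a - e_b) with |γ| = 1), then it is periodic at time τ in the perturbed graph with Laplacian L + αM. -/
open Matrix Complex

open NormedSpace in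
lemma exp_mulVec_eigen {n : ℕ} (A : Matrix (Fin n) (Fin n) ℂ) (v : Fin n → ℂ) (μ : ℂ)
    (h : A.mulVec v = μ • v) :
    (NormedSpace.exp A).mulVec v = Complex.exp μ • v := by
  letI : SeminormedRing (Matrix (Fin n) (Fin n) ℂ) := Matrix.linftyOpSemiNormedRing
  letI : NormedRing (Matrix (Fin n) (Fin n) ℂ) := Matrix.linftyOpNormedRing
  letI : NormedAlgebra ℂ (Matrix (Fin n) (Fin n) ℂ) := Matrix.linftyOpNormedAlgebra
  have hpow : ∀ k : ℕ, (A ^ k).mulVec v = μ ^ k • v := by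
    intro k
    induction k with
    | zero => simp
    | succ k ih =>
      rw [pow_succ', ← Matrix.mulVec_mulVec, ih, Matrix.mulVec_smul, h, smul_smul, ← pow_succ]
  have hsum : Summable (fun k : ℕ => ((k.factorial : ℂ)⁻¹) • A ^ k) :=
    NormedSpace.expSeries_summable' A
  let f : Matrix (Fin n) (Fin n) ℂ →ₗ[ℂ] (Fin n → ℂ) :=
    { toFun := fun B => B.mulVec v
      map_add' := fun B C => Matrix.add_mulVec B C v
      map_smul' := fun c B => Matrix.smul_mulVec c B v }
  have hcalc : (NormedSpace.exp A).mulVec v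
      = f.toContinuousLinearMap (∑' k : ℕ, ((k.factorial : ℂ)⁻¹) • A ^ k) := by
    rw [NormedSpace.exp_eq_tsum ℂ]; rfl
  rw [hcalc, ContinuousLinearMap.map_tsum _ hsum]
  have hterm : ∀ k : ℕ, f.toContinuousLinearMap (((k.factorial : ℂ)⁻¹) • A ^ k)
      = (((k.factorial : ℂ)⁻¹) * μ ^ k) • v := by
    intro k
    show (((k.factorial : ℂ)⁻¹) • A ^ k).mulVec v = _
    rw [Matrix.smul_mulVec, hpow, smul_smul]
  simp_rw [hterm]
  have hsum2 : Summable (fun k : ℕ => ((k.factorial : ℂ)⁻¹) * μ ^ k) := by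
    simpa [smul_eq_mul] using NormedSpace.expSeries_summable' (𝕂 := ℂ) μ
  rw [hsum2.tsum_smul_const]
  congr 1
  rw [Complex.exp_eq_exp_ℂ, NormedSpace.exp_eq_tsum ℂ]
  simp [smul_eq_mul]

theorem twin_pair_periodicity_preserved
    {n : ℕ} (G : SimpleGraph (Fin n)) [DecidableRel G.Adj]
    (a b : Fin n) (hab : a ≠ b)
    (htwin : ∀ v : Fin n, v ≠ a → v ≠ b → (G.Adj a v ↔ G.Adj b v))
    (α τ : ℝ) (γ : ℂ) (hγ : ‖γ‖ = 1)
    (hper : (NormedSpace.exp ((-(Complex.I * (τ : ℂ))) • G.lapMatrix ℂ)).mulVec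
        ((Pi.single a 1 : Fin n → ℂ) - Pi.single b 1)
      = γ • ((Pi.single a 1 : Fin n → ℂ) - Pi.single b 1)) :
    ∃ γ' : ℂ, ‖γ'‖ = 1 ∧
      (NormedSpace.exp ((-(Complex.I * (τ : ℂ))) •
          (G.lapMatrix ℂ + (α : ℂ) •
            vecMulVec ((Pi.single a 1 : Fin n → ℂ) - Pi.single b 1)
              ((Pi.single a 1 : Fin n → ℂ) - Pi.single b 1)))).mulVec
          ((Pi.single a 1 : Fin n → ℂ) - Pi.single b 1)
        = γ' • ((Pi.single a 1 : Fin n → ℂ) - Pi.single b 1) := by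
  set v : Fin n → ℂ := (Pi.single a 1 : Fin n → ℂ) - Pi.single b 1 with hv
  have hva : v a = 1 := by simp [hv, Pi.single_apply, hab, hab.symm]
  have hvb : v b = -1 := by simp [hv, Pi.single_apply, hab, hab.symm]
  have hvo : ∀ i, i ≠ a → i ≠ b → v i = 0 := by
    intro i hia hib; simp [hv, Pi.single_apply, hia, hib]
  -- degrees of twins agree
  have hdeg : (G.degree a : ℂ) = (G.degree b : ℂ) := by
    have key : ∑ x : Fin n, (if G.Adj a x then (1:ℂ) else 0)
        = ∑ x : Fin n, (if G.Adj b x then 1 else 0) := by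
      refine Finset.sum_equiv (Equiv.swap a b) (by simp) ?_
      intro i _
      rcases eq_or_ne i a with rfl | hia
      · simp [Equiv.swap_apply_left]
      rcases eq_or_ne i b with rfl | hib
      · simp [Equiv.swap_apply_right, G.adj_comm]
      · rw [Equiv.swap_apply_of_ne_of_ne hia hib]
        simp [htwin i hia hib]
    rw [G.degree_eq_sum_if_adj (R := ℂ) a, G.degree_eq_sum_if_adj (R := ℂ) b]
    exact key
  set c : ℝ := (G.degree a : ℝ) + (if G.Adj a b then 1 else 0) with hc
  have hsumN : ∀ i : Fin n, ∑ u ∈ G.neighborFinset i, v u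
      = (if G.Adj i a then 1 else 0) - (if G.Adj i b then 1 else 0) := by
    intro i
    have hvu : ∀ u, v u = (if u = a then (1:ℂ) else 0) - (if u = b then 1 else 0) := by
      intro u; simp [hv, Pi.single_apply]
    simp_rw [hvu, Finset.sum_sub_distrib, Finset.sum_ite_eq' _ _ (fun _ => (1:ℂ)),
      SimpleGraph.mem_neighborFinset]
  have hL : (G.lapMatrix ℂ).mulVec v = (c : ℂ) • v := by
    ext i
    rw [show (G.lapMatrix ℂ).mulVec v i = (G.lapMatrix ℂ *ᵥ v) i from rfl,
      SimpleGraph.lapMatrix_mulVec_apply, hsumN, Pi.smul_apply, smul_eq_mul]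
    by_cases hia : i = a
    · rw [hia, hva, hc]
      simp only [SimpleGraph.irrefl, if_false]
      split_ifs <;> push_cast <;> ring
    by_cases hib : i = b
    · rw [hib, hvb, hc, ← hdeg]
      simp only [SimpleGraph.irrefl, if_false, G.adj_comm b a]
      split_ifs <;> push_cast <;> ring
    · rw [hvo i hia hib]
      have : G.Adj i a ↔ G.Adj i b := by
        rw [G.adj_comm i a, G.adj_comm i b]
        exact htwin i hia hib
      simp [this]
  have h2 : ∑ j, v j * v j = 2 := by
    have key : ∀ j, v j * v j = (if j = a then (1:ℂ) else 0) + (if j = b then 1 else 0) := by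
      intro j
      rcases eq_or_ne j a with rfl | hja
      · simp [hva, hab]
      rcases eq_or_ne j b with rfl | hjb
      · simp [hvb, hab.symm]
      · simp [hvo j hja hjb, hja, hjb]
    simp [key, Finset.sum_add_distrib]
    norm_num
  have hM : (vecMulVec v v).mulVec v = (2 : ℂ) • v := by
    ext i
    simp only [Matrix.mulVec, dotProduct, Matrix.vecMulVec_apply, mul_assoc,
      ← Finset.mul_sum, h2, Pi.smul_apply, smul_eq_mul]
    ring
  have heig : ((-(Complex.I * (τ:ℂ))) • (G.lapMatrix ℂ + (α:ℂ) • vecMulVec v v)).mulVec v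
      = ((((-(τ * (c + 2*α)) : ℝ) : ℂ)) * Complex.I) • v := by
    rw [Matrix.smul_mulVec, Matrix.add_mulVec, Matrix.smul_mulVec, hL, hM,
      smul_smul, ← add_smul, smul_smul]
    congr 1
    push_cast
    ring
  refine ⟨Complex.exp ((((-(τ * (c + 2*α)) : ℝ) : ℂ)) * Complex.I), ?_, ?_⟩
  · rw [Complex.norm_exp]
    simp
  · exact exp_mulVec_eigen _ v _ heig
end
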